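/- Let K ⊆ S ⊆ S² be a spherically convex body satisfying the angular monotonicity property. Then the spherical diameter of its Steiner symmetral does not exceed that of K: diam(σ_{L,H}(K)) ≤ diam(K), where diam(X) = sup{d_s(x,y) : x,y ∈ X}. -/

import Mathlib

open Real Set MeasureTheory Metric Filter
open scoped RealInnerProductSpace ENNReal Topology

noncomputable section

/-- Euclidean 3-space; the unit sphere `S²` is `Metric.sphere (0 : E3) 1`. -/
abbrev E3 : Type := EuclideanSpace ℝ (Fin 3)

/-- The spherical distance `d_s(x,y) = arccos ⟨x,y⟩`. -/
def sphDist (x y : E3) : ℝ := Real.arccos ⟪x, y⟫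

/-- The shorter great-circle arc (spherical segment) joining two non-antipodal
unit vectors: the radial projection of the Euclidean segment-cone. -/
def sphSeg (x y : E3) : Set E3 :=
  {z | ∃ a b : ℝ, 0 ≤ a ∧ 0 ≤ b ∧ a • x + b • y ≠ 0 ∧
      z = ‖a • x + b • y‖⁻¹ • (a • x + b • y)}

/-- A set is spherically convex if it consists of unit vectors, is contained in an
open hemisphere, and contains the shorter arc joining any two of its (non-antipodal)
points. -/
def SphConvex (K : Set E3) : Prop :=
  K ⊆ sphere (0 : E3) 1 ∧ (∃ e : E3, ‖e‖ = 1 ∧ ∀ x ∈ K, 0 < ⟪e, x⟫) ∧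
    ∀ x ∈ K, ∀ y ∈ K, x ≠ -y → sphSeg x y ⊆ K

/-- Relative interior of a subset of the sphere (interior within the sphere). -/
def relInt (K : Set E3) : Set E3 :=
  {x | ∃ ε : ℝ, 0 < ε ∧ sphere (0 : E3) 1 ∩ ball x ε ⊆ K}

/-- A spherical convex body: compact, spherically convex, with nonempty
(relative) interior. -/
def SphBody (K : Set E3) : Prop :=
  IsCompact K ∧ SphConvex K ∧ (K ∩ relInt K).Nonempty

/-- Relative boundary of a subset of the sphere. -/
def relFrontier (K : Set E3) : Set E3 := K \ relInt K

/-- Perimeter: 1-dimensional Hausdorff measure of the (relative) boundary. -/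
def sphPerim (K : Set E3) : ℝ≥0∞ := μH[1] (relFrontier K)

/-- Spherical diameter: supremum of pairwise spherical distances. -/
def sphDiam (X : Set E3) : ℝ := sSup {d | ∃ x ∈ X, ∃ y ∈ X, d = sphDist x y}

/-- The point of `S²` with latitude `θ` (signed distance from the great circle `L`
in the `(x,y)`-plane) and longitude `φ` (signed distance along a distance curve from
the half great circle `H` in the `(x,z)`-plane). -/
def sphPt (θ φ : ℝ) : E3 :=
  (WithLp.equiv 2 (Fin 3 → ℝ)).symm
    ![Real.cos θ * Real.cos φ, Real.cos θ * Real.sin φ, Real.sin θ]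

/-- The center `c = (1,0,0)` of the fixed open hemisphere `S`. -/
def ce : E3 := sphPt 0 0

/-- The fixed open hemisphere `S` centered at `c = (1,0,0)`. -/
def hemi : Set E3 := {p ∈ sphere (0 : E3) 1 | 0 < p 0}

/-- The distance curve `C_θ ⊆ S` with axis `L` at signed spherical distance `θ`
from `L`; `C_0 = L`. -/
def distCurve (θ : ℝ) : Set E3 := {p | ∃ φ ∈ Ioo (-(π/2)) (π/2), p = sphPt θ φ}

/-- The set of longitudes `φ` at which the distance curve `C_θ` meets `K`. -/
def sliceSet (K : Set E3) (θ : ℝ) : Set ℝ :=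
  {φ | φ ∈ Ioo (-(π/2)) (π/2) ∧ sphPt θ φ ∈ K}

/-- The spherical Steiner symmetral `σ_{L,H}(K)` with respect to the standard pair
`(L,H)`: on each distance curve `C_θ` meeting `K`, the arc `K ∩ C_θ` is replaced by
the closed subarc of `C_θ` of the same (angular) length centered at `C_θ ∩ H`
(the point of longitude `0`). -/
def steiner (K : Set E3) : Set E3 :=
  {p | ∃ θ ∈ Ioo (-(π/2)) (π/2), ∃ φ : ℝ, p = sphPt θ φ ∧ (sliceSet K θ).Nonempty ∧
      |φ| ≤ (sSup (sliceSet K θ) - sInf (sliceSet K θ)) / 2}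

/-- The connectedness property: `K ∩ C` is connected (possibly empty or a point)
for every distance curve `C` with axis `L`. -/
def ConnProp (K : Set E3) : Prop := ∀ θ : ℝ, IsPreconnected (K ∩ distCurve θ)

/-- Angular length of the arc `K ∩ C_θ` (zero if the arc is empty or a point). -/
def angLen (K : Set E3) (θ : ℝ) : ℝ := sSup (sliceSet K θ) - sInf (sliceSet K θ)

/-- The monotonicity part of the angular monotonicity property: the angular length
of `K ∩ C_θ` is nonincreasing for `θ ≥ 0` and nondecreasing for `θ ≤ 0`. -/
def AngMonoLen (K : Set E3) : Prop :=
  (∀ θ₁ θ₂ : ℝ, 0 ≤ θ₁ → θ₁ ≤ θ₂ → angLen K θ₂ ≤ angLen K θ₁) ∧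
  (∀ θ₁ θ₂ : ℝ, θ₁ ≤ θ₂ → θ₂ ≤ 0 → angLen K θ₁ ≤ angLen K θ₂)

/-- The angular monotonicity property (including the connectedness of all the
arcs `K ∩ C_θ`). -/
def AngMono (K : Set E3) : Prop := ConnProp K ∧ AngMonoLen K

/-- `K` is symmetric with respect to the spherical point reflection in `c`. -/
def cSymm (K : Set E3) : Prop := ∀ x ∈ K, (2 * ⟪x, ce⟫) • ce - x ∈ K

/-- The closed spherical cap (ball) of radius `r` centered at `x`. -/
def cap (x : E3) (r : ℝ) : Set E3 := {y ∈ sphere (0 : E3) 1 | sphDist x y ≤ r}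

/-- Rotation of `S²` around the axis through `c = (1,0,0)` by angle `α`. -/
def rotc (α : ℝ) (p : E3) : E3 :=
  (WithLp.equiv 2 (Fin 3 → ℝ)).symm
    ![p 0, Real.cos α * p 1 - Real.sin α * p 2, Real.sin α * p 1 + Real.cos α * p 2]

/-- The Steiner symmetrization `σ_{L',H'}` with `L' ∩ H' = {c}`, where `(L',H')`
is the standard pair `(L,H)` rotated around `c` by angle `α`. -/
def steinerAt (α : ℝ) (K : Set E3) : Set E3 := rotc α '' steiner (rotc (-α) '' K)

/-- The general Steiner symmetrization on `S²` with respect to the frame obtained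
from the standard one by the orthogonal map `g`. -/
def steinerG (g : E3 ≃ₗᵢ[ℝ] E3) (K : Set E3) : Set E3 := ⇑g '' steiner (⇑g.symm '' K)

/-- The result of applying a finite sequence of Steiner symmetrizations to `K`. -/
def steinerSeq : Set E3 → List (E3 ≃ₗᵢ[ℝ] E3) → Set E3
  | K, [] => K
  | K, g :: gs => steinerSeq (steinerG g K) gs

/-- A finite sequence of Steiner symmetrizations is applicable to `K`: at each step
the current set lies in the open hemisphere centered at the intersection point of the
current axes and satisfies the angular monotonicity property with respect to the
current symmetrization. -/
def Applicable : Set E3 → List (E3 ≃ₗᵢ[ℝ] E3) → Prop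
  | _, [] => True
  | K, g :: gs => (⇑g.symm '' K ⊆ hemi ∧ AngMono (⇑g.symm '' K)) ∧ Applicable (steinerG g K) gs

/-- The spherical convex hull: intersection of all spherically convex sets
containing the given set. -/
def sphConvexHull (A : Set E3) : Set E3 := ⋂₀ {C | SphConvex C ∧ A ⊆ C}

/-- `P` is a spherically convex polygon with at most `N` vertices: the spherical
convex hull of at most `N` unit vectors contained in an open hemisphere. -/
def IsPolyN (N : ℕ) (P : Set E3) : Prop :=
  ∃ V : Finset E3, V.card ≤ N ∧ (V : Set E3) ⊆ sphere (0 : E3) 1 ∧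
    (∃ e : E3, ‖e‖ = 1 ∧ ∀ v ∈ V, 0 < ⟪e, v⟫) ∧ P = sphConvexHull (V : Set E3)

/-- `A_N(X)`: supremum of the areas of spherically convex polygons with at most `N`
vertices contained in `X`. -/
def AN (N : ℕ) (X : Set E3) : ℝ≥0∞ :=
  ⨆ (P : Set E3) (_ : IsPolyN N P ∧ P ⊆ X), μH[2] P

/-- First moment (vector-valued integral) of a subset of the sphere. -/
def sphMoment (A : Set E3) : E3 := ∫ u in A, u ∂μH[2]

/-- The spherical centroid `g_s(A)`: the normalized first moment. -/
def sphCentroid (A : Set E3) : E3 := ‖sphMoment A‖⁻¹ • sphMoment A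

/-- `arccos` is antitone. -/
lemma arccos_anti' {x y : ℝ} (h : x ≤ y) : Real.arccos y ≤ Real.arccos x := by
  unfold Real.arccos; linarith [Real.monotone_arcsin h]

lemma inner_sphPt' (θ₁ φ₁ θ₂ φ₂ : ℝ) :
    ⟪sphPt θ₁ φ₁, sphPt θ₂ φ₂⟫ =
      sin θ₁ * sin θ₂ + cos θ₁ * cos θ₂ * cos (φ₁ - φ₂) := by
  simp only [sphPt, PiLp.inner_apply, WithLp.equiv_symm_apply, PiLp.toLp_apply, RCLike.inner_apply,
    starRingEnd_apply, star_trivial, Fin.sum_univ_three]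
  simp [Matrix.cons_val_zero, Matrix.cons_val_one, Real.cos_sub]
  ring

lemma continuous_sphPt' (θ : ℝ) : Continuous fun φ => sphPt θ φ := by
  unfold sphPt
  refine (PiLp.continuous_toLp 2 (fun _ : Fin 3 => ℝ)).comp ?_
  refine continuous_pi fun i => ?_
  fin_cases i <;> simp <;> fun_prop

lemma sphDist_mono' (θ₁ θ₂ φ₁ φ₂ ψ₁ ψ₂ : ℝ) (h1 : 0 ≤ cos θ₁) (h2 : 0 ≤ cos θ₂)
    (h : |φ₁ - φ₂| ≤ |ψ₁ - ψ₂|) (hπ : |ψ₁ - ψ₂| ≤ π) :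
    sphDist (sphPt θ₁ φ₁) (sphPt θ₂ φ₂) ≤ sphDist (sphPt θ₁ ψ₁) (sphPt θ₂ ψ₂) := by
  unfold sphDist
  rw [inner_sphPt', inner_sphPt']
  apply arccos_anti'
  have hc : cos (ψ₁ - ψ₂) ≤ cos (φ₁ - φ₂) := by
    rw [← Real.cos_abs (ψ₁ - ψ₂), ← Real.cos_abs (φ₁ - φ₂)]
    exact Real.cos_le_cos_of_nonneg_of_le_pi (abs_nonneg _) hπ h
  have := mul_le_mul_of_nonneg_left hc (mul_nonneg h1 h2)
  linarith

lemma slice_props' (K : Set E3) (hcl : IsClosed K) (θ : ℝ) (hne : (sliceSet K θ).Nonempty) :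
    sphPt θ (sInf (sliceSet K θ)) ∈ K ∧ sphPt θ (sSup (sliceSet K θ)) ∈ K ∧
      -(π/2) ≤ sInf (sliceSet K θ) ∧ sSup (sliceSet K θ) ≤ π/2 ∧
      sInf (sliceSet K θ) ≤ sSup (sliceSet K θ) := by
  set S := sliceSet K θ with hS
  have hsub : S ⊆ Ioo (-(π/2)) (π/2) := fun x hx => hx.1
  have hb : BddAbove S := ⟨π/2, fun x hx => (hsub hx).2.le⟩
  have hb' : BddBelow S := ⟨-(π/2), fun x hx => (hsub hx).1.le⟩
  have hpre : IsClosed {φ : ℝ | sphPt θ φ ∈ K} := hcl.preimage (continuous_sphPt' θ)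
  have hclos : closure S ⊆ {φ : ℝ | sphPt θ φ ∈ K} :=
    closure_minimal (fun φ hφ => hφ.2) hpre
  exact ⟨hclos (csInf_mem_closure hne hb'), hclos (csSup_mem_closure hne hb),
    le_csInf hne (fun x hx => (hsub hx).1.le), csSup_le hne (fun x hx => (hsub hx).2.le),
    csInf_le_csSup hne hb' hb⟩

/-- Steiner symmetrization does not increase the spherical diameter
of a spherical convex body `K ⊆ S ⊆ S²` satisfying the angular monotonicity
property. -/
theorem steiner_diameter_le (K : Set E3) (hK : SphBody K) (hKS : K ⊆ hemi)
    (hmono : AngMono K) :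
    sphDiam (steiner K) ≤ sphDiam K := by
  have hcl : IsClosed K := hK.1.isClosed
  have hbdd : BddAbove {d | ∃ x ∈ K, ∃ y ∈ K, d = sphDist x y} := by
    refine ⟨π, ?_⟩; rintro d ⟨x, -, y, -, rfl⟩; exact Real.arccos_le_pi _
  obtain ⟨x₀, hx₀⟩ := hK.2.2
  have hnonneg : 0 ≤ sphDiam K :=
    le_trans (Real.arccos_nonneg _) (le_csSup hbdd ⟨x₀, hx₀.1, x₀, hx₀.1, rfl⟩)
  refine Real.sSup_le ?_ hnonneg
  rintro d ⟨p, hp, q, hq, rfl⟩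
  obtain ⟨θ₁, hθ₁, φ₁, rfl, hne₁, hφ₁⟩ := hp
  obtain ⟨θ₂, hθ₂, φ₂, rfl, hne₂, hφ₂⟩ := hq
  obtain ⟨hKa₁, hKb₁, hlo₁, hhi₁, hab₁⟩ := slice_props' K hcl θ₁ hne₁
  obtain ⟨hKa₂, hKb₂, hlo₂, hhi₂, hab₂⟩ := slice_props' K hcl θ₂ hne₂
  set a₁ := sInf (sliceSet K θ₁); set b₁ := sSup (sliceSet K θ₁)
  set a₂ := sInf (sliceSet K θ₂); set b₂ := sSup (sliceSet K θ₂)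
  have hcos₁ : 0 ≤ cos θ₁ := Real.cos_nonneg_of_mem_Icc ⟨by linarith [hθ₁.1], hθ₁.2.le⟩
  have hcos₂ : 0 ≤ cos θ₂ := Real.cos_nonneg_of_mem_Icc ⟨by linarith [hθ₂.1], hθ₂.2.le⟩
  have habs : |φ₁ - φ₂| ≤ |φ₁| + |φ₂| := abs_sub φ₁ φ₂
  rcases le_total (b₂ - a₁) (b₁ - a₂) with hcase | hcase
  · have h0 : 0 ≤ b₁ - a₂ := by linarith
    have key : |φ₁ - φ₂| ≤ |b₁ - a₂| := by rw [abs_of_nonneg h0]; linarith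
    have hπ' : |b₁ - a₂| ≤ π := by rw [abs_of_nonneg h0]; linarith
    calc sphDist (sphPt θ₁ φ₁) (sphPt θ₂ φ₂)
        ≤ sphDist (sphPt θ₁ b₁) (sphPt θ₂ a₂) := sphDist_mono' _ _ _ _ _ _ hcos₁ hcos₂ key hπ'
      _ ≤ sphDiam K := le_csSup hbdd ⟨_, hKb₁, _, hKa₂, rfl⟩
  · have h0 : 0 ≤ b₂ - a₁ := by linarith
    have heq : |a₁ - b₂| = b₂ - a₁ := by rw [abs_sub_comm]; exact abs_of_nonneg h0
    have key : |φ₁ - φ₂| ≤ |a₁ - b₂| := by rw [heq]; linarith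
    have hπ' : |a₁ - b₂| ≤ π := by rw [heq]; linarith
    calc sphDist (sphPt θ₁ φ₁) (sphPt θ₂ φ₂)
        ≤ sphDist (sphPt θ₁ a₁) (sphPt θ₂ b₂) := sphDist_mono' _ _ _ _ _ _ hcos₁ hcos₂ key hπ'
      _ ≤ sphDiam K := le_csSup hbdd ⟨_, hKa₁, _, hKb₂, rfl⟩
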